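/- In the labeling of mL_n given by λ(u_i^j) = j + m(i−1) and λ(v_i^j) = 2mn − m(i−1) − j + 1 (for 1 ≤ i ≤ n, 1 ≤ j ≤ m), the sum of the four vertex labels of every 4-cycle {u_i^j, u_{i+1}^j, v_{i+1}^j, v_i^j} equals 2(2mn) + 2 = 4mn + 2, independently of i and j; moreover these vertex labels form a bijection onto {1, ..., 2mn}. -/
import Mathlib


/-- The vertex labeling of `mLₙ` given by `λ(uᵢʲ) = j + m(i-1)` and
`λ(vᵢʲ) = 2mn - m(i-1) - j + 1` (here with 0-based indices: `u`-vertices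
`Sum.inl (j, i)`, `v`-vertices `Sum.inr (j, i)`). -/
def ladderVertexLabel (m n : ℕ) : (Fin m × Fin n) ⊕ (Fin m × Fin n) → ℕ :=
  Sum.elim (fun p => (p.1.val + 1) + m * p.2.val)
    (fun p => 2 * m * n - m * p.2.val - (p.1.val + 1) + 1)

lemma ladder_bound (m n : ℕ) (j : Fin m) (i : Fin n) :
    (j.val + 1) + m * i.val ≤ m * n := by
  have h : m * (i.val + 1) ≤ m * n := Nat.mul_le_mul_left m i.isLt
  rw [Nat.mul_succ] at h
  have := j.isLt
  omega

lemma ladder_key (m : ℕ) (hm : 0 < m) {j1 j2 i1 i2 : ℕ} (h1 : j1 < m) (h2 : j2 < m)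
    (h : j1 + m * i1 = j2 + m * i2) : j1 = j2 ∧ i1 = i2 := by
  have e1 : (j1 + m * i1) % m = j1 := by
    rw [Nat.add_mul_mod_self_left, Nat.mod_eq_of_lt h1]
  have e2 : (j2 + m * i2) % m = j2 := by
    rw [Nat.add_mul_mod_self_left, Nat.mod_eq_of_lt h2]
  have hj : j1 = j2 := by rw [← e1, ← e2, h]
  have hi : m * i1 = m * i2 := by omega
  exact ⟨hj, Nat.eq_of_mul_eq_mul_left hm hi⟩

/-- For this labeling of `mLₙ`, the sum of the four vertex labels of every
4-cycle `{uᵢʲ, uᵢ₊₁ʲ, vᵢ₊₁ʲ, vᵢʲ}` equals `2(2mn) + 2 = 4mn + 2`, independently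
of `i` and `j`; moreover the vertex labels form a bijection onto `{1,…,2mn}`. -/
theorem mLadder_vertex_labeling (m n : ℕ) (hm : 2 ≤ m) (hn : 2 ≤ n) :
    (∀ (j : Fin m) (i : Fin (n - 1)),
      ladderVertexLabel m n (Sum.inl (j, ⟨i.val, by have := i.isLt; omega⟩))
        + ladderVertexLabel m n (Sum.inl (j, ⟨i.val + 1, by have := i.isLt; omega⟩))
        + ladderVertexLabel m n (Sum.inr (j, ⟨i.val + 1, by have := i.isLt; omega⟩))
        + ladderVertexLabel m n (Sum.inr (j, ⟨i.val, by have := i.isLt; omega⟩))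
      = 2 * (2 * m * n) + 2) ∧
    Function.Injective (ladderVertexLabel m n) ∧
    Set.range (ladderVertexLabel m n) = Set.Icc 1 (2 * m * n) := by
  have hm' : 0 < m := by omega
  have h2mn : 2 * m * n = m * n + m * n := by ring
  refine ⟨?_, ?_, ?_⟩
  · intro j i
    have hi := i.isLt
    have hb1 := ladder_bound m n j ⟨i.val, by omega⟩
    have hb2 := ladder_bound m n j ⟨i.val + 1, by omega⟩
    simp only [ladderVertexLabel, Sum.elim_inl, Sum.elim_inr] at *
    rw [Nat.mul_succ] at hb2 ⊢
    have := j.isLt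
    omega
  · rintro (⟨j1, i1⟩ | ⟨j1, i1⟩) (⟨j2, i2⟩ | ⟨j2, i2⟩) h <;>
      simp only [ladderVertexLabel, Sum.elim_inl, Sum.elim_inr] at h <;>
      have hb1 := ladder_bound m n j1 i1 <;>
      have hb2 := ladder_bound m n j2 i2 <;>
      have hj1 := j1.isLt <;> have hj2 := j2.isLt
    · obtain ⟨hj, hi⟩ := ladder_key m hm' (i1 := i1.val) (i2 := i2.val) hj1 hj2 (by omega)
      simp [Prod.ext_iff, Fin.ext_iff, hj, hi]
    · omega
    · omega
    · obtain ⟨hj, hi⟩ := ladder_key m hm' (i1 := i1.val) (i2 := i2.val) hj1 hj2 (by omega)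
      simp [Prod.ext_iff, Fin.ext_iff, hj, hi]
  · ext k
    simp only [Set.mem_range, Set.mem_Icc]
    constructor
    · rintro ⟨(⟨j, i⟩ | ⟨j, i⟩), rfl⟩ <;>
        simp only [ladderVertexLabel, Sum.elim_inl, Sum.elim_inr] <;>
        have hb := ladder_bound m n j i <;> omega
    · rintro ⟨h1, h2⟩
      by_cases hk : k ≤ m * n
      · refine ⟨Sum.inl (⟨(k - 1) % m, Nat.mod_lt _ hm'⟩,
          ⟨(k - 1) / m, (Nat.div_lt_iff_lt_mul hm').2 (by rw [Nat.mul_comm]; omega)⟩), ?_⟩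
        simp only [ladderVertexLabel, Sum.elim_inl]
        have := Nat.mod_add_div (k - 1) m
        omega
      · set k' := 2 * m * n + 1 - k with hk'
        have hk'1 : 1 ≤ k' := by omega
        have hk'2 : k' ≤ m * n := by omega
        refine ⟨Sum.inr (⟨(k' - 1) % m, Nat.mod_lt _ hm'⟩,
          ⟨(k' - 1) / m, (Nat.div_lt_iff_lt_mul hm').2 (by rw [Nat.mul_comm]; omega)⟩), ?_⟩
        simp only [ladderVertexLabel, Sum.elim_inr]
        have := Nat.mod_add_div (k' - 1) m
        omega
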